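/- If θ₁ or θ₂ is rational, or if 1, θ₁, θ₂ are linearly dependent over ℚ, then BAD^Θ(2/3, 1/3) is non-empty. -/

import Mathlib

open scoped BigOperators

/-- Distance from a real number to the nearest integer. -/
noncomputable def dni (x : ℝ) : ℝ := |x - round x|

/-- `1, θ₁, θ₂` are linearly independent over `ℚ` (equivalently over `ℤ`). -/
def LinIndep (θ₁ θ₂ : ℝ) : Prop :=
  ∀ a b c : ℤ, (a : ℝ) + (b : ℝ) * θ₁ + (c : ℝ) * θ₂ = 0 → a = 0 ∧ b = 0 ∧ c = 0

/-- The weighted size `max(|m₁|, |m₂|²)` of an integer vector. -/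
noncomputable def wsize (m : ℤ × ℤ) : ℝ := max |(m.1 : ℝ)| ((m.2 : ℝ) ^ 2)

/-- The value of the linear form `‖θ₁ m₁ + θ₂ m₂‖`. -/
noncomputable def zeta (θ₁ θ₂ : ℝ) (m : ℤ × ℤ) : ℝ := dni (θ₁ * m.1 + θ₂ * m.2)

/-- `M = √(max(|m₁|, |m₂|²))`. -/
noncomputable def Mval (m : ℤ × ℤ) : ℝ := Real.sqrt (wsize m)

/-- `m = (m₁, m₂)` is a best approximation vector for `(θ₁, θ₂)` w.r.t. the
weighted norm `max(|x₁|, |x₂|²)`. -/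
def IsBestApprox (θ₁ θ₂ : ℝ) (m : ℤ × ℤ) : Prop :=
  m ≠ 0 ∧ ∃ m₀ : ℤ,
    |(m₀ : ℝ) + θ₁ * m.1 + θ₂ * m.2| = zeta θ₁ θ₂ m ∧
    ∀ x₀ x₁ x₂ : ℤ,
      max |(x₁ : ℝ)| ((x₂ : ℝ) ^ 2) ≤ wsize m →
      |(x₀ : ℝ) + θ₁ * x₁ + θ₂ * x₂| ≤ zeta θ₁ θ₂ m →
      ((x₀, x₁, x₂) = ((0 : ℤ), (0 : ℤ), (0 : ℤ)) ∨
        (x₀, x₁, x₂) = (m₀, m.1, m.2) ∨ (x₀, x₁, x₂) = (-m₀, -m.1, -m.2))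

/-- An enumeration `m : ℕ → ℤ × ℤ` of all the best approximation vectors of
`(θ₁, θ₂)`, ordered so that `M_ν` is strictly increasing (each best
approximation appears up to sign). -/
def IsBestApproxSeq (θ₁ θ₂ : ℝ) (m : ℕ → ℤ × ℤ) : Prop :=
  (∀ ν, IsBestApprox θ₁ θ₂ (m ν)) ∧
  (StrictMono fun ν => Mval (m ν)) ∧
  (∀ p : ℤ × ℤ, IsBestApprox θ₁ θ₂ p → ∃ ν, p = m ν ∨ p = -(m ν))

/-- `(η₁, η₂)` belongs to `BAD^Θ(2/3, 1/3)`. -/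
def BADT (θ₁ θ₂ η₁ η₂ : ℝ) : Prop :=
  ∃ c > 0, ∀ q : ℕ, 0 < q →
    c ≤ max ((q : ℝ) ^ ((2 : ℝ) / 3) * dni (q * θ₁ - η₁))
          ((q : ℝ) ^ ((1 : ℝ) / 3) * dni (q * θ₂ - η₂))

lemma key (θ₁ θ₂ η₁ η₂ : ℝ) (a b c : ℤ)
    (hbc : b ≠ 0 ∨ c ≠ 0)
    (hrel : (a : ℝ) + b * θ₁ + c * θ₂ = 0)
    (hη : (b : ℝ) * η₁ + c * η₂ = 1/2) :
    BADT θ₁ θ₂ η₁ η₂ := by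
  set K : ℝ := |(b:ℝ)| + |(c:ℝ)| with hKdef
  have hK1 : 1 ≤ K := by
    rcases hbc with hb | hc
    · have h1 : (1:ℝ) ≤ |(b:ℝ)| := by
        have := Int.one_le_abs hb
        calc (1:ℝ) ≤ ((|b| : ℤ) : ℝ) := by exact_mod_cast this
          _ = |(b:ℝ)| := by push_cast; ring
      have := abs_nonneg (c:ℝ); linarith
    · have h1 : (1:ℝ) ≤ |(c:ℝ)| := by
        have := Int.one_le_abs hc
        calc (1:ℝ) ≤ ((|c| : ℤ) : ℝ) := by exact_mod_cast this
          _ = |(c:ℝ)| := by push_cast; ring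
      have := abs_nonneg (b:ℝ); linarith
  have hKpos : 0 < K := by linarith
  refine ⟨1/(2*K), by positivity, ?_⟩
  intro q hq
  have hq1 : (1:ℝ) ≤ (q:ℝ) := by exact_mod_cast hq
  set x₁ : ℝ := q*θ₁ - η₁ with hx1
  set x₂ : ℝ := q*θ₂ - η₂ with hx2
  have hsum : (b:ℝ)*x₁ + c*x₂ = -(q:ℝ)*a - 1/2 := by
    rw [hx1, hx2]; linear_combination (q:ℝ)*hrel - hη
  set n : ℤ := -(q:ℤ)*a - b*(round x₁) - c*(round x₂) with hn
  have heps : (b:ℝ)*(x₁ - round x₁) + c*(x₂ - round x₂) = (n:ℝ) - 1/2 := by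
    rw [hn]; push_cast; linarith [hsum]
  have h1 : (1:ℝ)/2 ≤ |(n:ℝ) - 1/2| := by
    have hne : (2*n - 1 : ℤ) ≠ 0 := by omega
    have h2 : (1:ℝ) ≤ |2*(n:ℝ) - 1| := by
      have := Int.one_le_abs hne
      calc (1:ℝ) ≤ ((|2*n-1| : ℤ) : ℝ) := by exact_mod_cast this
        _ = |2*(n:ℝ) - 1| := by push_cast; ring_nf
    have h3 : |2*(n:ℝ)-1| = 2*|(n:ℝ)-1/2| := by
      rw [show (2*(n:ℝ)-1) = 2*((n:ℝ)-1/2) by ring, abs_mul]; norm_num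
    linarith [h3 ▸ h2]
  have hd1 : dni x₁ ≤ max (dni x₁) (dni x₂) := le_max_left _ _
  have hd2 : dni x₂ ≤ max (dni x₁) (dni x₂) := le_max_right _ _
  have hmax : 1/(2*K) ≤ max (dni x₁) (dni x₂) := by
    have hb1 : |(b:ℝ)*(x₁ - round x₁)| = |(b:ℝ)| * dni x₁ := by rw [abs_mul]; rfl
    have hb2 : |(c:ℝ)*(x₂ - round x₂)| = |(c:ℝ)| * dni x₂ := by rw [abs_mul]; rfl
    have htri : |(n:ℝ) - 1/2| ≤ |(b:ℝ)| * dni x₁ + |(c:ℝ)| * dni x₂ := by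
      rw [← heps, ← hb1, ← hb2]; exact abs_add_le _ _
    have hle : |(b:ℝ)| * dni x₁ + |(c:ℝ)| * dni x₂ ≤ K * max (dni x₁) (dni x₂) := by
      rw [hKdef, add_mul]
      have g1 := mul_le_mul_of_nonneg_left hd1 (abs_nonneg (b:ℝ))
      have g2 := mul_le_mul_of_nonneg_left hd2 (abs_nonneg (c:ℝ))
      linarith
    have : (1:ℝ)/2 ≤ K * max (dni x₁) (dni x₂) := le_trans h1 (le_trans htri hle)
    rw [div_le_iff₀ (by positivity)]
    nlinarith [this]
  have e1 : dni x₁ ≤ (q:ℝ)^((2:ℝ)/3) * dni x₁ :=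
    le_mul_of_one_le_left (abs_nonneg _) (Real.one_le_rpow hq1 (by norm_num))
  have e2 : dni x₂ ≤ (q:ℝ)^((1:ℝ)/3) * dni x₂ :=
    le_mul_of_one_le_left (abs_nonneg _) (Real.one_le_rpow hq1 (by norm_num))
  calc 1/(2*K) ≤ max (dni x₁) (dni x₂) := hmax
    _ ≤ max ((q:ℝ)^((2:ℝ)/3) * dni x₁) ((q:ℝ)^((1:ℝ)/3) * dni x₂) := max_le_max e1 e2



lemma key' (θ₁ θ₂ : ℝ) (a b c : ℤ)
    (hbc : b ≠ 0 ∨ c ≠ 0)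
    (hrel : (a : ℝ) + b * θ₁ + c * θ₂ = 0) :
    ∃ η₁ η₂ : ℝ, BADT θ₁ θ₂ η₁ η₂ := by
  rcases hbc with hb | hc
  · refine ⟨1/(2*b), 0, key θ₁ θ₂ _ _ a b c (Or.inl hb) hrel ?_⟩
    have : (b:ℝ) ≠ 0 := Int.cast_ne_zero.mpr hb
    field_simp
    ring
  · refine ⟨0, 1/(2*c), key θ₁ θ₂ _ _ a b c (Or.inr hc) hrel ?_⟩
    have : (c:ℝ) ≠ 0 := Int.cast_ne_zero.mpr hc
    field_simp
    ring

/-- the degenerate (rational/dependent) case. -/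
theorem stmt_10 (θ₁ θ₂ : ℝ)
    (h : (∃ r : ℚ, θ₁ = (r : ℝ)) ∨ (∃ r : ℚ, θ₂ = (r : ℝ)) ∨
      ∃ a b c : ℤ, ¬(a = 0 ∧ b = 0 ∧ c = 0) ∧
        (a : ℝ) + (b : ℝ) * θ₁ + (c : ℝ) * θ₂ = 0) :
    ∃ η₁ η₂ : ℝ, BADT θ₁ θ₂ η₁ η₂ := by
  rcases h with ⟨r, hr⟩ | ⟨r, hr⟩ | ⟨a, b, c, habc, hrel⟩
  · refine key' θ₁ θ₂ (-r.num) (r.den : ℤ) 0 (Or.inl ?_) ?_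
    · exact_mod_cast r.den_nz
    · have hd : ((r.den : ℤ) : ℝ) ≠ 0 := by exact_mod_cast r.den_nz
      rw [hr, Rat.cast_def]
      push_cast
      field_simp
      ring
  · refine key' θ₁ θ₂ (-r.num) 0 (r.den : ℤ) (Or.inr ?_) ?_
    · exact_mod_cast r.den_nz
    · have hd : ((r.den : ℤ) : ℝ) ≠ 0 := by exact_mod_cast r.den_nz
      rw [hr, Rat.cast_def]
      push_cast
      field_simp
      ring
  · have hbc : b ≠ 0 ∨ c ≠ 0 := by
      by_contra hcon
      push_neg at hcon
      obtain ⟨hb, hc⟩ := hcon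
      subst hb; subst hc
      simp at hrel
      exact habc ⟨by exact_mod_cast hrel, rfl, rfl⟩
    exact key' θ₁ θ₂ a b c hbc hrel
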